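/- Let n ≥ 2 and T, α, σ_q, σ_p(1), …, σ_p(T) be given with α > 0, σ_q > 0, σ_p(k) ≥ 0. Let A be an n×n real symmetric positive semidefinite matrix with largest eigenvalue λ₁ and second largest eigenvalue λ₂ satisfying λ₁ > λ₂, and let v be a unit eigenvector of A for λ₁. Let Ξ be an n×n real symmetric positive semidefinite matrix with eigenvalues μ₁ > μ₂ ≥ … ≥ μ_n > 0 and corresponding orthonormal eigenvectors u₁, …, u_n, and suppose E := ‖Ξ − A‖₂ satisfies E ≤ λ₁ − λ₂. Define Ω := σ_q²·(αΞ)^{2T} + Σ_{k=1}^{T} σ_p(k)²·(αΞ)^{2(T−k)} and ρ := (σ_q² + Σ_{k=1}^T (αμ₂)^{−2k} σ_p(k)²) / (σ_q² + Σ_{k=1}^T (αμ₁)^{−2k} σ_p(k)²). Then 1 − (vᵀΩv)/trace(Ω) ≤ 2·(E/(λ₁ − λ₂) + (n−1)·ρ·(μ₂/μ₁)^{2T}). -/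

import Mathlib

open Matrix Finset

/-- The spectral (ℓ²-operator) norm of a real matrix. -/
noncomputable def specNorm {n : ℕ} (M : Matrix (Fin n) (Fin n) ℝ) : ℝ :=
  ‖Matrix.toEuclideanCLM (𝕜 := ℝ) M‖

/-- Deterministic spectral part of Theorem 3: the misalignment of the covariance
`Ω` of the final iterate with the true principal eigenvector `v` of `A` is bounded by
the Davis–Kahan perturbation term plus the geometric decay of the non-principal
variance components. -/

lemma specNorm_nonneg {n : ℕ} (M : Matrix (Fin n) (Fin n) ℝ) : 0 ≤ specNorm M :=
  norm_nonneg _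

lemma specNorm_neg {n : ℕ} (M : Matrix (Fin n) (Fin n) ℝ) : specNorm (-M) = specNorm M := by
  unfold specNorm; rw [map_neg, norm_neg]

lemma cs_bound {n : ℕ} (M : Matrix (Fin n) (Fin n) ℝ) (x y : Fin n → ℝ)
    (hx : x ⬝ᵥ x ≤ 1) (hy : y ⬝ᵥ y ≤ 1) : x ⬝ᵥ M.mulVec y ≤ specNorm M := by
  set x' : EuclideanSpace ℝ (Fin n) := (WithLp.equiv 2 _).symm x with hx'
  set y' : EuclideanSpace ℝ (Fin n) := (WithLp.equiv 2 _).symm y with hy'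
  have h1 : x ⬝ᵥ M.mulVec y = inner ℝ x' (Matrix.toEuclideanCLM (𝕜 := ℝ) M y') := by
    rw [hy', Matrix.toEuclideanCLM_toLp]
    simp [PiLp.inner_apply, dotProduct, Matrix.toLin'_apply, hx', mul_comm]
  have hxn : ‖x'‖ ≤ 1 := by
    have : ‖x'‖ ^ 2 ≤ 1 := by
      rw [← real_inner_self_eq_norm_sq, PiLp.inner_apply]
      simpa [dotProduct, hx', sq] using hx
    nlinarith [norm_nonneg x']
  have hyn : ‖y'‖ ≤ 1 := by
    have : ‖y'‖ ^ 2 ≤ 1 := by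
      rw [← real_inner_self_eq_norm_sq, PiLp.inner_apply]
      simpa [dotProduct, hy', sq] using hy
    nlinarith [norm_nonneg y']
  calc x ⬝ᵥ M.mulVec y = inner ℝ x' (Matrix.toEuclideanCLM (𝕜 := ℝ) M y') := h1
    _ ≤ ‖x'‖ * ‖Matrix.toEuclideanCLM (𝕜 := ℝ) M y'‖ := real_inner_le_norm _ _
    _ ≤ ‖x'‖ * (specNorm M * ‖y'‖) := by
        gcongr; exact (Matrix.toEuclideanCLM (𝕜 := ℝ) M).le_opNorm y'
    _ ≤ 1 * (specNorm M * 1) := by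
        have := specNorm_nonneg M
        gcongr
    _ = specNorm M := by ring

lemma decomp_eq {n : ℕ} (U : Matrix (Fin n) (Fin n) ℝ) (hU : Uᵀ * U = 1)
    (M : Matrix (Fin n) (Fin n) ℝ) (f : Fin n → ℝ)
    (h : ∀ i, M.mulVec (fun j => U i j) = f i • (fun j => U i j)) :
    M = Uᵀ * Matrix.diagonal f * U := by
  have h2 : M * Uᵀ = Uᵀ * Matrix.diagonal f := by
    ext j i
    have h1 : (M * Uᵀ) j i = f i * U i j := by
      rw [Matrix.mul_apply]
      have := congrFun (h i) j
      simpa [Matrix.mulVec, dotProduct, Matrix.transpose_apply] using this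
    have h2' : (Uᵀ * Matrix.diagonal f) j i = U i j * f i := by
      rw [Matrix.mul_diagonal, Matrix.transpose_apply]
    rw [h1, h2', mul_comm]
  calc M = M * (Uᵀ * U) := by rw [hU, Matrix.mul_one]
    _ = (M * Uᵀ) * U := by rw [Matrix.mul_assoc]
    _ = Uᵀ * Matrix.diagonal f * U := by rw [h2]

lemma trace_decomp {n : ℕ} (U : Matrix (Fin n) (Fin n) ℝ) (hU : Uᵀ * U = 1) (f : Fin n → ℝ) :
    (Uᵀ * Matrix.diagonal f * U).trace = ∑ i, f i := by
  rw [Matrix.trace_mul_cycle, mul_eq_one_comm.mp hU,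
    Matrix.one_mul, Matrix.trace_diagonal]

lemma quad_decomp {n : ℕ} (U : Matrix (Fin n) (Fin n) ℝ) (f : Fin n → ℝ) (x : Fin n → ℝ) :
    x ⬝ᵥ (Uᵀ * Matrix.diagonal f * U).mulVec x
      = ∑ i, f i * (U.mulVec x i) ^ 2 := by
  rw [← Matrix.mulVec_mulVec, ← Matrix.mulVec_mulVec, Matrix.dotProduct_mulVec,
    Matrix.vecMul_transpose]
  simp [Matrix.mulVec_diagonal, dotProduct]
  exact Finset.sum_congr rfl fun i _ => by ring

lemma sum_mulVec' {n : ℕ} {ι : Type*} (s : Finset ι) (M : ι → Matrix (Fin n) (Fin n) ℝ)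
    (x : Fin n → ℝ) : (∑ k ∈ s, M k).mulVec x = ∑ k ∈ s, (M k).mulVec x := by
  ext j
  simp [Matrix.mulVec, dotProduct, Finset.sum_apply, Matrix.sum_apply, Finset.sum_mul]
  rw [Finset.sum_comm]

lemma assemble (S Q f0 R s B : ℝ) (hS : 0 < S) (hf0 : 0 < f0) (hf0S : f0 ≤ S)
    (hSQ : S - Q ≤ s * f0 + R) (hs0 : 0 ≤ s) (hR0 : 0 ≤ R) (hRB : R ≤ B) :
    1 - Q / S ≤ s + B / f0 := by
  rw [one_sub_div hS.ne']
  have h1 : (S - Q) / S ≤ (s * f0 + R) / S := by gcongr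
  have h2 : (s * f0 + R) / S = s * (f0 / S) + R / S := by ring
  have h3 : s * (f0 / S) ≤ s * 1 := by
    apply mul_le_mul_of_nonneg_left _ hs0
    rw [div_le_one hS]; exact hf0S
  have h4 : R / S ≤ B / f0 := by
    calc R / S ≤ R / f0 := by gcongr
      _ ≤ B / f0 := by gcongr
  linarith [h1, h3, h4, h2 ▸ h1]

lemma factor_f (a : ℝ) (ha : 0 < a) (T : ℕ) (σq : ℝ) (σp : ℕ → ℝ) :
    σq ^ 2 * a ^ (2 * T) + ∑ k ∈ Finset.Icc 1 T, σp k ^ 2 * a ^ (2 * (T - k))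
      = a ^ (2 * T) * (σq ^ 2 + ∑ k ∈ Finset.Icc 1 T, (a ^ (2 * k))⁻¹ * σp k ^ 2) := by
  rw [mul_add, Finset.mul_sum]
  congr 1
  · ring
  apply Finset.sum_congr rfl
  intro k hk
  have hk' : k ≤ T := (Finset.mem_Icc.mp hk).2
  have h2 : 2 * (T - k) = 2 * T - 2 * k := by omega
  rw [h2, pow_sub₀ a ha.ne' (by omega)]
  field_simp

lemma ratio_eq (α μ0 μ1 : ℝ) (hα : 0 < α) (h0 : 0 < μ0) (h1 : 0 < μ1)
    (T : ℕ) (σq : ℝ) (σp : ℕ → ℝ) :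
    (σq ^ 2 * (α * μ1) ^ (2 * T) + ∑ k ∈ Finset.Icc 1 T, σp k ^ 2 * (α * μ1) ^ (2 * (T - k))) /
      (σq ^ 2 * (α * μ0) ^ (2 * T) + ∑ k ∈ Finset.Icc 1 T, σp k ^ 2 * (α * μ0) ^ (2 * (T - k)))
      = (σq ^ 2 + ∑ k ∈ Finset.Icc 1 T, ((α * μ1) ^ (2 * k))⁻¹ * σp k ^ 2) /
          (σq ^ 2 + ∑ k ∈ Finset.Icc 1 T, ((α * μ0) ^ (2 * k))⁻¹ * σp k ^ 2) *
          (μ1 / μ0) ^ (2 * T) := by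
  rw [factor_f _ (mul_pos hα h1), factor_f _ (mul_pos hα h0), mul_div_mul_comm,
    ← div_pow, mul_div_mul_left _ _ hα.ne', mul_comm]

set_option maxHeartbeats 1000000 in
theorem stmt_14 (n T : ℕ) (hn : 2 ≤ n) (α σq : ℝ) (σp : ℕ → ℝ)
    (hα : 0 < α) (hσq : 0 < σq) (hσp : ∀ k ∈ Finset.Icc 1 T, 0 ≤ σp k)
    (A : Matrix (Fin n) (Fin n) ℝ) (hA_symm : A.IsSymm) (hA_psd : A.PosSemidef)
    (lam₁ lam₂ : ℝ) (hgap : lam₂ < lam₁)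
    (v : Fin n → ℝ) (hv_unit : v ⬝ᵥ v = 1) (hv_eig : A.mulVec v = lam₁ • v)
    (hlam₂ : ∀ w : Fin n → ℝ, w ⬝ᵥ v = 0 → w ⬝ᵥ (A.mulVec w) ≤ lam₂ * (w ⬝ᵥ w))
    (Ξ : Matrix (Fin n) (Fin n) ℝ) (hΞ_symm : Ξ.IsSymm) (hΞ_psd : Ξ.PosSemidef)
    (μ : Fin n → ℝ) (u : Fin n → (Fin n → ℝ))
    (hu : ∀ i j, u i ⬝ᵥ u j = if i = j then 1 else 0)
    (heig : ∀ i, Ξ.mulVec (u i) = μ i • u i)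
    (hμ_pos : ∀ i, 0 < μ i)
    (hμ_anti : ∀ i j : Fin n, i ≤ j → μ j ≤ μ i)
    (hμ_gap : μ (⟨1, by omega⟩ : Fin n) < μ (⟨0, by omega⟩ : Fin n))
    (hE : specNorm (Ξ - A) ≤ lam₁ - lam₂) :
    1 - (v ⬝ᵥ ((σq ^ 2 • (α • Ξ) ^ (2 * T) +
            ∑ k ∈ Finset.Icc 1 T, σp k ^ 2 • (α • Ξ) ^ (2 * (T - k))).mulVec v)) /
          (σq ^ 2 • (α • Ξ) ^ (2 * T) +
            ∑ k ∈ Finset.Icc 1 T, σp k ^ 2 • (α • Ξ) ^ (2 * (T - k))).trace ≤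
      2 * (specNorm (Ξ - A) / (lam₁ - lam₂) +
        ((n : ℝ) - 1) *
          ((σq ^ 2 + ∑ k ∈ Finset.Icc 1 T,
              ((α * μ (⟨1, by omega⟩ : Fin n)) ^ (2 * k))⁻¹ * σp k ^ 2) /
            (σq ^ 2 + ∑ k ∈ Finset.Icc 1 T,
              ((α * μ (⟨0, by omega⟩ : Fin n)) ^ (2 * k))⁻¹ * σp k ^ 2)) *
          (μ (⟨1, by omega⟩ : Fin n) / μ (⟨0, by omega⟩ : Fin n)) ^ (2 * T)) := by
  have h1n : 1 < n := by omega
  set i0 : Fin n := ⟨0, by omega⟩ with hi0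
  set i1 : Fin n := ⟨1, by omega⟩ with hi1
  set E : ℝ := specNorm (Ξ - A) with hEdef
  have hE0 : 0 ≤ E := specNorm_nonneg _
  have hgap' : 0 < lam₁ - lam₂ := by linarith
  set U : Matrix (Fin n) (Fin n) ℝ := Matrix.of (fun i j => u i j) with hUdef
  have hUUt : U * Uᵀ = 1 := by
    ext i j
    simpa [hUdef, Matrix.mul_apply, Matrix.one_apply, dotProduct] using hu i j
  have hUtU : Uᵀ * U = 1 := mul_eq_one_comm.mp hUUt
  set c : Fin n → ℝ := U.mulVec v with hcdef
  have hcc : ∑ i, c i ^ 2 = 1 := by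
    have h := quad_decomp U (fun _ => (1 : ℝ)) v
    rw [Matrix.diagonal_one, Matrix.mul_one, hUtU, Matrix.one_mulVec, hv_unit] at h
    simpa using h.symm
  have hci : ∀ i, c i = u i ⬝ᵥ v := fun i => rfl
  set f : Fin n → ℝ := fun i => σq ^ 2 * (α * μ i) ^ (2 * T)
      + ∑ k ∈ Finset.Icc 1 T, σp k ^ 2 * (α * μ i) ^ (2 * (T - k)) with hfdef
  have hpow : ∀ (m : ℕ) (i : Fin n),
      ((α • Ξ) ^ m).mulVec (u i) = ((α * μ i) ^ m) • u i := by
    intro m i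
    induction m with
    | zero => simp [Matrix.one_mulVec]
    | succ m ih =>
      rw [pow_succ, ← Matrix.mulVec_mulVec, Matrix.smul_mulVec, heig,
        Matrix.mulVec_smul, Matrix.mulVec_smul, ih, smul_smul, smul_smul, pow_succ]
      ring_nf
  set Ω : Matrix (Fin n) (Fin n) ℝ := σq ^ 2 • (α • Ξ) ^ (2 * T) +
      ∑ k ∈ Finset.Icc 1 T, σp k ^ 2 • (α • Ξ) ^ (2 * (T - k)) with hΩdef
  have hΩeig : ∀ i, Ω.mulVec (u i) = f i • u i := by
    intro i
    rw [hΩdef, Matrix.add_mulVec, Matrix.smul_mulVec, hpow, sum_mulVec']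
    have h' : ∀ k ∈ Finset.Icc 1 T,
        (σp k ^ 2 • (α • Ξ) ^ (2 * (T - k))).mulVec (u i)
          = (σp k ^ 2 * (α * μ i) ^ (2 * (T - k))) • u i := by
      intro k _
      rw [Matrix.smul_mulVec, hpow, smul_smul]
    rw [Finset.sum_congr rfl h', ← Finset.sum_smul, smul_smul, ← add_smul, hfdef]
  have hΩdecomp : Ω = Uᵀ * Matrix.diagonal f * U :=
    decomp_eq U hUtU Ω f (fun i => hΩeig i)
  have hΞdecomp : Ξ = Uᵀ * Matrix.diagonal μ * U :=
    decomp_eq U hUtU Ξ μ (fun i => heig i)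
  have htr : Ω.trace = ∑ i, f i := by rw [hΩdecomp]; exact trace_decomp U hUtU f
  have hquad : v ⬝ᵥ Ω.mulVec v = ∑ i, f i * c i ^ 2 := by
    rw [hΩdecomp]; exact quad_decomp U f v
  have hvΞv : v ⬝ᵥ Ξ.mulVec v = ∑ i, μ i * c i ^ 2 := by
    rw [hΞdecomp]; exact quad_decomp U μ v
  have hαμ : ∀ i, 0 < α * μ i := fun i => mul_pos hα (hμ_pos i)
  have hfpos : ∀ i, 0 < f i := by
    intro i
    have h1 : 0 < σq ^ 2 * (α * μ i) ^ (2 * T) :=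
      mul_pos (pow_pos hσq 2) (pow_pos (hαμ i) _)
    have h2 : 0 ≤ ∑ k ∈ Finset.Icc 1 T, σp k ^ 2 * (α * μ i) ^ (2 * (T - k)) :=
      Finset.sum_nonneg fun k _ => mul_nonneg (sq_nonneg _) (pow_nonneg (hαμ i).le _)
    rw [hfdef]; dsimp only; linarith
  haveI : Nonempty (Fin n) := ⟨i0⟩
  have hSpos : 0 < ∑ i, f i :=
    Finset.sum_pos (fun i _ => hfpos i) Finset.univ_nonempty
  have hf0S : f i0 ≤ ∑ i, f i :=
    Finset.single_le_sum (fun i _ => (hfpos i).le) (Finset.mem_univ i0)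
  have hc2le1 : ∀ i, c i ^ 2 ≤ 1 := by
    intro i
    have h := Finset.single_le_sum (f := fun j => c j ^ 2)
      (fun j _ => sq_nonneg (c j)) (Finset.mem_univ i)
    rw [hcc] at h; exact h
  -- Davis–Kahan part
  set c0 : ℝ := c i0 with hc0
  set w : Fin n → ℝ := u i0 - c0 • v with hwdef
  have hc0' : c0 = u i0 ⬝ᵥ v := hci i0
  have hwv : w ⬝ᵥ v = 0 := by
    rw [hwdef, sub_dotProduct, smul_dotProduct, hv_unit, hc0']
    simp
  have hvu0 : v ⬝ᵥ u i0 = c0 := by rw [hc0', dotProduct_comm]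
  have hu0self : u i0 ⬝ᵥ u i0 = 1 := by rw [hu i0 i0]; simp
  have hww : w ⬝ᵥ w = 1 - c0 ^ 2 := by
    rw [hwdef, sub_dotProduct, dotProduct_sub, dotProduct_sub,
      smul_dotProduct, smul_dotProduct, dotProduct_smul,
      dotProduct_smul, hv_unit, hvu0, hu0self, ← hc0']
    simp; ring
  have hwnn : 0 ≤ w ⬝ᵥ w := Finset.sum_nonneg fun i _ => mul_self_nonneg _
  have hc0le : c0 ^ 2 ≤ 1 := by nlinarith [hww, hwnn]
  have hwle : w ⬝ᵥ w ≤ 1 := by nlinarith [hww, sq_nonneg c0]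
  have hwu0 : w ⬝ᵥ u i0 = 1 - c0 ^ 2 := by
    rw [hwdef, sub_dotProduct, smul_dotProduct, hu0self, hvu0,
      smul_eq_mul]
    ring
  have hμ0E : lam₁ - μ i0 ≤ E := by
    have hΞle : v ⬝ᵥ Ξ.mulVec v ≤ μ i0 := by
      rw [hvΞv]
      calc ∑ i, μ i * c i ^ 2 ≤ ∑ i, μ i0 * c i ^ 2 := by
            apply Finset.sum_le_sum
            intro i _
            exact mul_le_mul_of_nonneg_right
              (hμ_anti i0 i (by simp [hi0, Fin.le_def])) (sq_nonneg _)
        _ = μ i0 := by rw [← Finset.mul_sum, hcc, mul_one]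
    have hAv : v ⬝ᵥ A.mulVec v = lam₁ := by
      rw [hv_eig, dotProduct_smul, hv_unit]; simp
    have hcs : v ⬝ᵥ (A - Ξ).mulVec v ≤ E := by
      rw [hEdef, ← specNorm_neg, neg_sub]
      exact cs_bound _ _ _ hv_unit.le hv_unit.le
    rw [Matrix.sub_mulVec, dotProduct_sub, hAv] at hcs
    linarith
  have hDK : (μ i0 - lam₂) * (1 - c0 ^ 2) ≤ E := by
    have hwA : w ⬝ᵥ A.mulVec (u i0) = w ⬝ᵥ A.mulVec w := by
      have hu0w : u i0 = w + c0 • v := by rw [hwdef]; abel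
      rw [hu0w, Matrix.mulVec_add, Matrix.mulVec_smul, hv_eig, dotProduct_add,
        dotProduct_smul, dotProduct_smul, hwv]
      simp
    have hwΞ : w ⬝ᵥ Ξ.mulVec (u i0) = μ i0 * (1 - c0 ^ 2) := by
      rw [heig, dotProduct_smul, hwu0]; simp
    have hcs : w ⬝ᵥ (Ξ - A).mulVec (u i0) ≤ E :=
      cs_bound _ _ _ hwle hu0self.le
    rw [Matrix.sub_mulVec, dotProduct_sub, hwΞ, hwA] at hcs
    have hA2 : w ⬝ᵥ A.mulVec w ≤ lam₂ * (w ⬝ᵥ w) := hlam₂ w hwv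
    rw [hww] at hA2
    linarith
  have h1c : 1 - c0 ^ 2 ≤ 2 * E / (lam₁ - lam₂) := by
    rw [le_div_iff₀ hgap']
    have hs0 : 0 ≤ 1 - c0 ^ 2 := by linarith
    have t1 : (lam₁ - μ i0) * (1 - c0 ^ 2) ≤ E * (1 - c0 ^ 2) :=
      mul_le_mul_of_nonneg_right hμ0E hs0
    have t2 : E * (1 - c0 ^ 2) ≤ E * 1 := by
      apply mul_le_mul_of_nonneg_left _ hE0
      linarith
    linarith [t1, t2, hDK]
  -- monotonicity of f away from the principal eigenvalue
  have hfmono : ∀ i : Fin n, i ≠ i0 → f i ≤ f i1 := by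
    intro i hi
    have hival : (i : ℕ) ≠ 0 := fun h => hi (Fin.ext (by simp [hi0, h]))
    have hμi : μ i ≤ μ i1 := hμ_anti i1 i (by simp [hi1, Fin.le_def]; omega)
    have hb : α * μ i ≤ α * μ i1 := mul_le_mul_of_nonneg_left hμi hα.le
    rw [hfdef]; dsimp only
    gcongr <;> first | exact (hαμ i).le | exact hb
  -- numerator bound
  set R : ℝ := ∑ i ∈ Finset.univ.erase i0, f i with hRdef
  have hR0 : 0 ≤ R := Finset.sum_nonneg fun i _ => (hfpos i).le
  have hRB : R ≤ ((n : ℝ) - 1) * f i1 := by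
    have hcard : (Finset.univ.erase i0).card = n - 1 := by
      rw [Finset.card_erase_of_mem (Finset.mem_univ _), Finset.card_univ, Fintype.card_fin]
    have hsum := Finset.sum_le_card_nsmul (Finset.univ.erase i0) f (f i1)
      (fun i hi => hfmono i (Finset.ne_of_mem_erase hi))
    rw [hcard, nsmul_eq_mul] at hsum
    have hcast : ((n - 1 : ℕ) : ℝ) = (n : ℝ) - 1 := by
      rw [Nat.cast_sub (by omega)]; simp
    rwa [hcast] at hsum
  have hQ' : (∑ i, f i) - (∑ i, f i * c i ^ 2) ≤ (1 - c0 ^ 2) * f i0 + R := by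
    have e1 : (∑ i, f i) - (∑ i, f i * c i ^ 2) = ∑ i, (1 - c i ^ 2) * f i := by
      rw [← Finset.sum_sub_distrib]
      exact Finset.sum_congr rfl fun i _ => by ring
    rw [e1, ← Finset.add_sum_erase _ _ (Finset.mem_univ i0)]
    have e2 : ∑ i ∈ Finset.univ.erase i0, (1 - c i ^ 2) * f i ≤ R := by
      rw [hRdef]
      apply Finset.sum_le_sum
      intro i _
      nlinarith [hfpos i, sq_nonneg (c i)]
    have e3 : (1 - c i0 ^ 2) * f i0 = (1 - c0 ^ 2) * f i0 := by rw [hc0]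
    linarith [e2, e3.le]
  have main1 : 1 - (v ⬝ᵥ Ω.mulVec v) / Ω.trace
      ≤ (1 - c0 ^ 2) + (((n : ℝ) - 1) * f i1) / f i0 := by
    rw [htr, hquad]
    exact assemble _ _ _ R _ _ hSpos (hfpos i0) hf0S hQ' (by linarith [hc0le]) hR0 hRB
  have hrt : f i1 / f i0 =
      (σq ^ 2 + ∑ k ∈ Finset.Icc 1 T, ((α * μ i1) ^ (2 * k))⁻¹ * σp k ^ 2) /
        (σq ^ 2 + ∑ k ∈ Finset.Icc 1 T, ((α * μ i0) ^ (2 * k))⁻¹ * σp k ^ 2) *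
        (μ i1 / μ i0) ^ (2 * T) :=
    ratio_eq α (μ i0) (μ i1) hα (hμ_pos i0) (hμ_pos i1) T σq σp
  have hterm : 0 ≤ ((n : ℝ) - 1) *
      ((σq ^ 2 + ∑ k ∈ Finset.Icc 1 T, ((α * μ i1) ^ (2 * k))⁻¹ * σp k ^ 2) /
        (σq ^ 2 + ∑ k ∈ Finset.Icc 1 T, ((α * μ i0) ^ (2 * k))⁻¹ * σp k ^ 2)) *
      (μ i1 / μ i0) ^ (2 * T) := by
    have hn1 : (0 : ℝ) ≤ (n : ℝ) - 1 := by
      have : (2 : ℝ) ≤ (n : ℝ) := by exact_mod_cast hn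
      linarith
    have hg1 : 0 ≤ σq ^ 2 + ∑ k ∈ Finset.Icc 1 T, ((α * μ i1) ^ (2 * k))⁻¹ * σp k ^ 2 := by
      have := Finset.sum_nonneg (s := Finset.Icc 1 T)
        (f := fun k => ((α * μ i1) ^ (2 * k))⁻¹ * σp k ^ 2)
        (fun k _ => mul_nonneg (inv_nonneg.mpr (pow_nonneg (hαμ i1).le _)) (sq_nonneg _))
      positivity
    have hg0 : 0 ≤ σq ^ 2 + ∑ k ∈ Finset.Icc 1 T, ((α * μ i0) ^ (2 * k))⁻¹ * σp k ^ 2 := by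
      have := Finset.sum_nonneg (s := Finset.Icc 1 T)
        (f := fun k => ((α * μ i0) ^ (2 * k))⁻¹ * σp k ^ 2)
        (fun k _ => mul_nonneg (inv_nonneg.mpr (pow_nonneg (hαμ i0).le _)) (sq_nonneg _))
      positivity
    have hr0 : 0 ≤ (μ i1 / μ i0) ^ (2 * T) :=
      pow_nonneg (div_nonneg (hμ_pos i1).le (hμ_pos i0).le) _
    exact mul_nonneg (mul_nonneg hn1 (div_nonneg hg1 hg0)) hr0
  calc 1 - (v ⬝ᵥ Ω.mulVec v) / Ω.trace
      ≤ (1 - c0 ^ 2) + (((n : ℝ) - 1) * f i1) / f i0 := main1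
    _ = (1 - c0 ^ 2) + ((n : ℝ) - 1) * (f i1 / f i0) := by ring
    _ = (1 - c0 ^ 2) + ((n : ℝ) - 1) *
          ((σq ^ 2 + ∑ k ∈ Finset.Icc 1 T, ((α * μ i1) ^ (2 * k))⁻¹ * σp k ^ 2) /
            (σq ^ 2 + ∑ k ∈ Finset.Icc 1 T, ((α * μ i0) ^ (2 * k))⁻¹ * σp k ^ 2) *
            (μ i1 / μ i0) ^ (2 * T)) := by rw [hrt]
    _ ≤ 2 * E / (lam₁ - lam₂) + ((n : ℝ) - 1) *
          ((σq ^ 2 + ∑ k ∈ Finset.Icc 1 T, ((α * μ i1) ^ (2 * k))⁻¹ * σp k ^ 2) /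
            (σq ^ 2 + ∑ k ∈ Finset.Icc 1 T, ((α * μ i0) ^ (2 * k))⁻¹ * σp k ^ 2) *
            (μ i1 / μ i0) ^ (2 * T)) := by linarith [h1c]
    _ ≤ 2 * (E / (lam₁ - lam₂) +
          ((n : ℝ) - 1) *
            ((σq ^ 2 + ∑ k ∈ Finset.Icc 1 T, ((α * μ i1) ^ (2 * k))⁻¹ * σp k ^ 2) /
              (σq ^ 2 + ∑ k ∈ Finset.Icc 1 T, ((α * μ i0) ^ (2 * k))⁻¹ * σp k ^ 2)) *
            (μ i1 / μ i0) ^ (2 * T)) := by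
        have h2E : 2 * (E / (lam₁ - lam₂)) = 2 * E / (lam₁ - lam₂) := by ring
        linarith [hterm]
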